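/- Let Ω ⊆ [n₁]×[n₂]×[n₃] and suppose a, b, c ∈ ℂ with all relevant components nonzero, a₁ = b₁ = 1, satisfy Q_{ijk} = a_i b_j c_k on Ω, and that condition (A) holds. Then the rank-one solution over ℂ is not unique (i.e., there exists another solution a', b', c' with a'₁ = b'₁ = 1 differing from a, b, c on Ω-relevant components) if and only if there exist real numbers α_i, β_j, γ_k ∈ (0, 2π) with α₁ = 0, β₁ = 0 (interpreting indices 1 as excluded from the open-interval requirement) solving α_i + β_j + γ_k = σ_{ijk} for all (i,j,k) ∈ Ω, for some choice σ_{ijk} ∈ {0, 2π, 4π}, such that not all α_i, β_j, γ_k used are multiples of 2π. -/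

import Mathlib

open Real

noncomputable def arg2 (w : ℂ) : ℝ := if w.arg < 0 then w.arg + 2*π else w.arg

lemma arg2_mem_Ico (w : ℂ) : arg2 w ∈ Set.Ico 0 (2*π) := by
  unfold arg2
  have h1 := Complex.arg_le_pi w
  have h2 := Complex.neg_pi_lt_arg w
  have hπ := Real.pi_pos
  split <;> constructor <;> linarith

lemma exp_two_pi' : Complex.exp (((2*π : ℝ) : ℂ) * Complex.I) = 1 := by
  rw [show ((2*π:ℝ):ℂ) = 2*(π:ℂ) by push_cast; ring]
  exact Complex.exp_two_pi_mul_I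

lemma exp_arg2 (w : ℂ) (h : ‖w‖ = 1) : Complex.exp (arg2 w * Complex.I) = w := by
  have key : Complex.exp (w.arg * Complex.I) = w := by
    have := Complex.norm_mul_exp_arg_mul_I w
    rwa [h, Complex.ofReal_one, one_mul] at this
  unfold arg2
  split
  · rw [Complex.ofReal_add, add_mul, Complex.exp_add, key, exp_two_pi', mul_one]
  · exact key

lemma arg2_one : arg2 1 = 0 := by simp [arg2, Complex.arg_one]

lemma exp_eq_one_iff' (θ : ℝ) : Complex.exp (θ * Complex.I) = 1 ↔ ∃ m : ℤ, θ = 2*π*m := by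
  rw [Complex.exp_eq_one_iff]
  constructor
  · rintro ⟨n, hn⟩
    refine ⟨n, ?_⟩
    have h2 : (θ:ℂ) * Complex.I = ((2*π*n : ℝ):ℂ) * Complex.I := by rw [hn]; push_cast; ring
    have h3 := mul_right_cancel₀ Complex.I_ne_zero h2
    exact_mod_cast h3
  · rintro ⟨m, hm⟩
    exact ⟨m, by rw [hm]; push_cast; ring⟩

lemma ratio_ne_one (u v : ℂ) (hv : v ≠ 0) (hne : u ≠ v) (habs : ‖u/v‖ = 1) :
    ¬ ∃ m : ℤ, arg2 (u/v) = 2*π*m := by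
  rintro ⟨m, hm⟩
  obtain ⟨h0, h1⟩ := arg2_mem_Ico (u/v)
  have hπ := Real.pi_pos
  rw [hm] at h0 h1
  have hmge : (0:ℤ) ≤ m := by
    by_contra h
    push_neg at h
    have h' : m ≤ -1 := by omega
    have : (m:ℝ) ≤ -1 := by exact_mod_cast h'
    nlinarith
  have hmlt : m < 1 := by
    by_contra h
    push_neg at h
    have : (1:ℝ) ≤ m := by exact_mod_cast h
    nlinarith
  have hm0 : m = 0 := by omega
  rw [hm0] at hm
  simp at hm
  have := exp_arg2 (u/v) habs
  rw [hm] at this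
  simp at this
  exact hne ((div_eq_one_iff_eq hv).mp this.symm)

lemma log_abs_mul3 (u v w : ℂ) (hu : u ≠ 0) (hv : v ≠ 0) (hw : w ≠ 0) :
    Real.log (‖u*v*w‖) =
      Real.log (‖u‖) + Real.log (‖v‖) + Real.log (‖w‖) := by
  rw [norm_mul, norm_mul,
    Real.log_mul (mul_ne_zero ((norm_ne_zero_iff.mpr hu)) ((norm_ne_zero_iff.mpr hv)))
      ((norm_ne_zero_iff.mpr hw)),
    Real.log_mul ((norm_ne_zero_iff.mpr hu)) ((norm_ne_zero_iff.mpr hv))]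

/-- Under condition (A), the complex rank-one solution is not unique iff the
phase system with right-hand sides in `{0, 2π, 4π}` has a nontrivial solution. -/
theorem complex_not_unique_iff_phase_system
    (n₁ n₂ n₃ : ℕ)
    (Ω : Finset (Fin (n₁ + 1) × Fin (n₂ + 1) × Fin (n₃ + 1)))
    (Q : Fin (n₁ + 1) × Fin (n₂ + 1) × Fin (n₃ + 1) → ℂ)
    (hQ : ∀ t ∈ Ω, Q t ≠ 0)
    (a : Fin (n₁ + 1) → ℂ) (b : Fin (n₂ + 1) → ℂ) (c : Fin (n₃ + 1) → ℂ)
    (hnz : ∀ t ∈ Ω, a t.1 ≠ 0 ∧ b t.2.1 ≠ 0 ∧ c t.2.2 ≠ 0)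
    (ha0 : a 0 = 1) (hb0 : b 0 = 1)
    (hsol : ∀ t ∈ Ω, Q t = a t.1 * b t.2.1 * c t.2.2)
    (hA : ∀ x : Fin (n₁ + 1) → ℝ, ∀ y : Fin (n₂ + 1) → ℝ, ∀ z : Fin (n₃ + 1) → ℝ,
      x 0 = 0 → y 0 = 0 → (∀ t ∈ Ω, x t.1 + y t.2.1 + z t.2.2 = 0) →
      ∀ t ∈ Ω, x t.1 = 0 ∧ y t.2.1 = 0 ∧ z t.2.2 = 0) :
    (∃ a' : Fin (n₁ + 1) → ℂ, ∃ b' : Fin (n₂ + 1) → ℂ, ∃ c' : Fin (n₃ + 1) → ℂ,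
      a' 0 = 1 ∧ b' 0 = 1 ∧
      (∀ t ∈ Ω, Q t = a' t.1 * b' t.2.1 * c' t.2.2) ∧
      (∃ t ∈ Ω, a' t.1 ≠ a t.1 ∨ b' t.2.1 ≠ b t.2.1 ∨ c' t.2.2 ≠ c t.2.2)) ↔
    (∃ α : Fin (n₁ + 1) → ℝ, ∃ β : Fin (n₂ + 1) → ℝ, ∃ γ : Fin (n₃ + 1) → ℝ,
      ∃ σ : Fin (n₁ + 1) × Fin (n₂ + 1) × Fin (n₃ + 1) → ℝ,
      α 0 = 0 ∧ β 0 = 0 ∧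
      (∀ t ∈ Ω, σ t = 0 ∨ σ t = 2 * π ∨ σ t = 4 * π) ∧
      (∀ t ∈ Ω, α t.1 + β t.2.1 + γ t.2.2 = σ t) ∧
      (∀ t ∈ Ω, α t.1 ∈ Set.Ico 0 (2 * π) ∧ β t.2.1 ∈ Set.Ico 0 (2 * π) ∧
        γ t.2.2 ∈ Set.Ico 0 (2 * π)) ∧
      (∃ t ∈ Ω, (¬ ∃ m : ℤ, α t.1 = 2 * π * m) ∨ (¬ ∃ m : ℤ, β t.2.1 = 2 * π * m) ∨
        (¬ ∃ m : ℤ, γ t.2.2 = 2 * π * m))) := by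
  constructor
  · rintro ⟨a', b', c', ha'0, hb'0, hsol', t0, ht0, hdiff⟩
    -- the second solution has nonzero relevant components
    have hnz' : ∀ t ∈ Ω, a' t.1 ≠ 0 ∧ b' t.2.1 ≠ 0 ∧ c' t.2.2 ≠ 0 := by
      intro t ht
      have h := hsol' t ht
      have hq := hQ t ht
      rw [h] at hq
      refine ⟨?_, ?_, ?_⟩ <;> intro h0 <;> apply hq <;> rw [h0] <;> ring
    -- absolute values agree, via condition (A) applied to logarithms
    set x : Fin (n₁+1) → ℝ :=
      fun i => Real.log (‖a' i‖) - Real.log (‖a i‖) with hxdef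
    set y : Fin (n₂+1) → ℝ :=
      fun j => Real.log (‖b' j‖) - Real.log (‖b j‖) with hydef
    set z : Fin (n₃+1) → ℝ :=
      fun k => Real.log (‖c' k‖) - Real.log (‖c k‖) with hzdef
    have hx0 : x 0 = 0 := by simp [hxdef, ha0, ha'0]
    have hy0 : y 0 = 0 := by simp [hydef, hb0, hb'0]
    have hsum : ∀ t ∈ Ω, x t.1 + y t.2.1 + z t.2.2 = 0 := by
      intro t ht
      obtain ⟨ha1, hb1, hc1⟩ := hnz t ht
      obtain ⟨ha2, hb2, hc2⟩ := hnz' t ht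
      have e1 : Real.log (‖a t.1 * b t.2.1 * c t.2.2‖) =
          Real.log (‖a' t.1 * b' t.2.1 * c' t.2.2‖) := by
        rw [← hsol t ht, ← hsol' t ht]
      rw [log_abs_mul3 _ _ _ ha1 hb1 hc1, log_abs_mul3 _ _ _ ha2 hb2 hc2] at e1
      simp only [hxdef, hydef, hzdef]
      linarith
    have habsA := hA x y z hx0 hy0 hsum
    have habs : ∀ t ∈ Ω, ‖a' t.1 / a t.1‖ = 1 ∧
        ‖b' t.2.1 / b t.2.1‖ = 1 ∧ ‖c' t.2.2 / c t.2.2‖ = 1 := by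
      intro t ht
      obtain ⟨hx, hy, hz⟩ := habsA t ht
      obtain ⟨ha1, hb1, hc1⟩ := hnz t ht
      obtain ⟨ha2, hb2, hc2⟩ := hnz' t ht
      simp only [hxdef, hydef, hzdef, sub_eq_zero] at hx hy hz
      have e1 : ‖a' t.1‖ = ‖a t.1‖ := by
        rw [← Real.exp_log ((norm_pos_iff.mpr ha2)), ← Real.exp_log ((norm_pos_iff.mpr ha1)), hx]
      have e2 : ‖b' t.2.1‖ = ‖b t.2.1‖ := by
        rw [← Real.exp_log ((norm_pos_iff.mpr hb2)), ← Real.exp_log ((norm_pos_iff.mpr hb1)), hy]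
      have e3 : ‖c' t.2.2‖ = ‖c t.2.2‖ := by
        rw [← Real.exp_log ((norm_pos_iff.mpr hc2)), ← Real.exp_log ((norm_pos_iff.mpr hc1)), hz]
      refine ⟨?_, ?_, ?_⟩ <;> rw [norm_div]
      · rw [e1]; exact div_self ((norm_ne_zero_iff.mpr ha1))
      · rw [e2]; exact div_self ((norm_ne_zero_iff.mpr hb1))
      · rw [e3]; exact div_self ((norm_ne_zero_iff.mpr hc1))
    -- the ratios are unit complex numbers given by the phases
    have hexp : ∀ t ∈ Ω,
        Complex.exp (((arg2 (a' t.1 / a t.1) + arg2 (b' t.2.1 / b t.2.1)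
          + arg2 (c' t.2.2 / c t.2.2) : ℝ)) * Complex.I) = 1 := by
      intro t ht
      obtain ⟨e1, e2, e3⟩ := habs t ht
      obtain ⟨ha1, hb1, hc1⟩ := hnz t ht
      have key : Complex.exp (arg2 (a' t.1 / a t.1) * Complex.I) *
          Complex.exp (arg2 (b' t.2.1 / b t.2.1) * Complex.I) *
          Complex.exp (arg2 (c' t.2.2 / c t.2.2) * Complex.I) = 1 := by
        rw [exp_arg2 _ e1, exp_arg2 _ e2, exp_arg2 _ e3]
        have hprod : a' t.1 * b' t.2.1 * c' t.2.2 = a t.1 * b t.2.1 * c t.2.2 := by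
          rw [← hsol t ht, ← hsol' t ht]
        field_simp
        linear_combination hprod
      rw [← key, ← Complex.exp_add, ← Complex.exp_add]
      push_cast
      ring_nf
    refine ⟨fun i => arg2 (a' i / a i), fun j => arg2 (b' j / b j),
      fun k => arg2 (c' k / c k),
      fun t => arg2 (a' t.1 / a t.1) + arg2 (b' t.2.1 / b t.2.1) + arg2 (c' t.2.2 / c t.2.2),
      ?_, ?_, ?_, fun t _ => rfl, fun t _ => ⟨arg2_mem_Ico _, arg2_mem_Ico _, arg2_mem_Ico _⟩, ?_⟩
    · show arg2 (a' 0 / a 0) = 0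
      rw [ha'0, ha0, div_one, arg2_one]
    · show arg2 (b' 0 / b 0) = 0
      rw [hb'0, hb0, div_one, arg2_one]
    · -- σ takes values in {0, 2π, 4π}
      intro t ht
      obtain ⟨m, hm⟩ := (exp_eq_one_iff' _).mp (hexp t ht)
      obtain ⟨hα0, hα1⟩ := arg2_mem_Ico (a' t.1 / a t.1)
      obtain ⟨hβ0, hβ1⟩ := arg2_mem_Ico (b' t.2.1 / b t.2.1)
      obtain ⟨hγ0, hγ1⟩ := arg2_mem_Ico (c' t.2.2 / c t.2.2)
      have hπ := Real.pi_pos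
      have hmge : (0:ℤ) ≤ m := by
        by_contra h
        push_neg at h
        have h' : m ≤ -1 := by omega
        have : (m:ℝ) ≤ -1 := by exact_mod_cast h'
        nlinarith
      have hmlt : m < 3 := by
        by_contra h
        push_neg at h
        have : (3:ℝ) ≤ m := by exact_mod_cast h
        nlinarith
      interval_cases m
      · left
        show arg2 (a' t.1 / a t.1) + arg2 (b' t.2.1 / b t.2.1) + arg2 (c' t.2.2 / c t.2.2) = 0
        rw [hm]; norm_num
      · right; left
        show arg2 (a' t.1 / a t.1) + arg2 (b' t.2.1 / b t.2.1) + arg2 (c' t.2.2 / c t.2.2) = 2 * π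
        rw [hm]; norm_num
      · right; right
        show arg2 (a' t.1 / a t.1) + arg2 (b' t.2.1 / b t.2.1) + arg2 (c' t.2.2 / c t.2.2) = 4 * π
        rw [hm]; push_cast; ring
    · -- nontriviality
      refine ⟨t0, ht0, ?_⟩
      obtain ⟨e1, e2, e3⟩ := habs t0 ht0
      obtain ⟨ha1, hb1, hc1⟩ := hnz t0 ht0
      rcases hdiff with h | h | h
      · exact Or.inl (ratio_ne_one _ _ ha1 h e1)
      · exact Or.inr (Or.inl (ratio_ne_one _ _ hb1 h e2))
      · exact Or.inr (Or.inr (ratio_ne_one _ _ hc1 h e3))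
  · rintro ⟨α, β, γ, σ, hα0, hβ0, hσval, hsys, _hmem, t0, ht0, hnt⟩
    refine ⟨fun i => a i * Complex.exp (α i * Complex.I),
      fun j => b j * Complex.exp (β j * Complex.I),
      fun k => c k * Complex.exp (γ k * Complex.I), ?_, ?_, ?_, ?_⟩
    · show a 0 * Complex.exp ((α 0 : ℝ) * Complex.I) = 1
      rw [ha0, hα0]; simp
    · show b 0 * Complex.exp ((β 0 : ℝ) * Complex.I) = 1
      rw [hb0, hβ0]; simp
    · intro t ht
      have hone : Complex.exp (α t.1 * Complex.I) * Complex.exp (β t.2.1 * Complex.I) *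
          Complex.exp (γ t.2.2 * Complex.I) = 1 := by
        rw [← Complex.exp_add, ← Complex.exp_add,
          show (α t.1 : ℂ) * Complex.I + (β t.2.1 : ℂ) * Complex.I
              + (γ t.2.2 : ℂ) * Complex.I
            = ((α t.1 + β t.2.1 + γ t.2.2 : ℝ) : ℂ) * Complex.I by push_cast; ring,
          hsys t ht]
        rcases hσval t ht with h | h | h
        · rw [h]; simp
        · rw [h]; exact exp_two_pi'
        · rw [h, show ((4*π : ℝ):ℂ) * Complex.I
              = ((2*π:ℝ):ℂ) * Complex.I + ((2*π:ℝ):ℂ) * Complex.I by push_cast; ring,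
            Complex.exp_add, exp_two_pi', mul_one]
      calc Q t = a t.1 * b t.2.1 * c t.2.2 := hsol t ht
        _ = a t.1 * b t.2.1 * c t.2.2 * (Complex.exp (α t.1 * Complex.I) *
              Complex.exp (β t.2.1 * Complex.I) * Complex.exp (γ t.2.2 * Complex.I)) := by
            rw [hone, mul_one]
        _ = a t.1 * Complex.exp (α t.1 * Complex.I) * (b t.2.1 * Complex.exp (β t.2.1 * Complex.I))
              * (c t.2.2 * Complex.exp (γ t.2.2 * Complex.I)) := by ring
    · refine ⟨t0, ht0, ?_⟩
      obtain ⟨ha1, hb1, hc1⟩ := hnz t0 ht0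
      have gen : ∀ (w : ℂ) (θ : ℝ), w ≠ 0 → (¬ ∃ m : ℤ, θ = 2*π*m) →
          w * Complex.exp (θ * Complex.I) ≠ w := by
        intro w θ hw hθ heq
        have h1 : w * Complex.exp (θ * Complex.I) = w * 1 := by rw [heq, mul_one]
        have h2 := mul_left_cancel₀ hw h1
        exact hθ ((exp_eq_one_iff' θ).mp h2)
      rcases hnt with h | h | h
      · exact Or.inl (gen _ _ ha1 h)
      · exact Or.inr (Or.inl (gen _ _ hb1 h))
      · exact Or.inr (Or.inr (gen _ _ hc1 h))
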